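/- Deterministic excess-risk bound for objective perturbation (Lipschitz case): Let C ⊆ ℝ^p, let L : ℝ^p → ℝ, let θ₀ ∈ ℝ^p, ζ ≥ 0, and b ∈ ℝ^p, and define J(θ) = L(θ) + (ζ/2)·‖θ − θ₀‖₂². Suppose θ̂ ∈ C attains the minimum of J over C, θ^priv ∈ C attains the minimum over C of θ ↦ J(θ) + ⟨b, θ⟩, and θ* ∈ C attains the minimum of L over C. Then L(θ^priv) − L(θ*) ≤ ⟨b, θ̂ − θ^priv⟩ + (ζ/2)·‖θ* − θ₀‖₂². -/
import Mathlib

open RealInnerProductSpace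

/-- Deterministic excess-risk bound for objective perturbation (Lipschitz case). -/
theorem objective_perturbation_lipschitz {p : ℕ}
    (C : Set (EuclideanSpace ℝ (Fin p)))
    (L : EuclideanSpace ℝ (Fin p) → ℝ)
    (θ0 : EuclideanSpace ℝ (Fin p)) (ζ : ℝ) (hζ : 0 ≤ ζ)
    (b : EuclideanSpace ℝ (Fin p))
    (J : EuclideanSpace ℝ (Fin p) → ℝ)
    (hJ : ∀ θ, J θ = L θ + ζ / 2 * ‖θ - θ0‖ ^ 2)
    (θhat : EuclideanSpace ℝ (Fin p)) (hθhat : θhat ∈ C)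
    (hminJ : ∀ θ ∈ C, J θhat ≤ J θ)
    (θpriv : EuclideanSpace ℝ (Fin p)) (hθpriv : θpriv ∈ C)
    (hminpriv : ∀ θ ∈ C, J θpriv + ⟪b, θpriv⟫ ≤ J θ + ⟪b, θ⟫)
    (θs : EuclideanSpace ℝ (Fin p)) (hθs : θs ∈ C)
    (hminL : ∀ θ ∈ C, L θs ≤ L θ) :
    L θpriv - L θs ≤ ⟪b, θhat - θpriv⟫ + ζ / 2 * ‖θs - θ0‖ ^ 2 := by
  have h1 := hminpriv θhat hθhat
  have h2 := hminJ θs hθs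
  rw [inner_sub_right]
  have hp : 0 ≤ ζ / 2 * ‖θpriv - θ0‖ ^ 2 := by positivity
  rw [hJ θpriv, hJ θhat] at h1
  rw [hJ θhat, hJ θs] at h2
  nlinarith
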